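/- arXiv:1101.6069 — 2 statements merged into one kernel-verified Lean document; each statement's English description precedes it below -/
import Mathlib

section
/- Assume hypotheses (H1) and (H2). Then for every η ∈ X ∖ {□} such that Φ(η,□) ≤ Φ(η,⊞), one has H(η) > H(□) = 0. -/
open scoped Classical

variable {X : Type*}

/-- `ω` (restricted to 0,…,L) is a path of allowed moves from `a` to `b`. -/
def IsPathW (rel : X → X → Prop) (a b : X) (L : ℕ) (ω : ℕ → X) : Prop :=
  ω 0 = a ∧ ω L = b ∧ ∀ i < L, rel (ω i) (ω (i + 1))

/-- The maximal energy along the path `ω = (ω 0, …, ω L)`. -/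
noncomputable def pathMax (H : X → ℝ) (L : ℕ) (ω : ℕ → X) : ℝ :=
  (Finset.range (L + 1)).sup' Finset.nonempty_range_add_one fun i => H (ω i)

/-- Communication height Φ(a,b) between two configurations. -/
noncomputable def commH (rel : X → X → Prop) (H : X → ℝ) (a b : X) : ℝ :=
  sInf { m : ℝ | ∃ L ω, IsPathW rel a b L ω ∧ m = pathMax H L ω }

/-- Communication height Φ(A,B) between two sets of configurations. -/
noncomputable def commHS (rel : X → X → Prop) (H : X → ℝ) (A B : Set X) : ℝ :=
  sInf { m : ℝ | ∃ a ∈ A, ∃ b ∈ B, m = commH rel H a b }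

/-- The graph (X,∼) is connected. -/
def ConnGraph (rel : X → X → Prop) : Prop :=
  ∀ a b : X, ∃ L ω, IsPathW rel a b L ω

section aux
variable [Fintype X] {rel : X → X → Prop} {H : X → ℝ}

lemma pathMax_mem_range (L : ℕ) (ω : ℕ → X) : pathMax H L ω ∈ Set.range H := by
  obtain ⟨i, _, h⟩ := Finset.exists_mem_eq_sup' (Finset.nonempty_range_add_one (n := L))
    (fun i => H (ω i))
  exact ⟨ω i, h.symm⟩

lemma commSet_finite (a b : X) :
    {m : ℝ | ∃ L ω, IsPathW rel a b L ω ∧ m = pathMax H L ω}.Finite := by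
  apply (Set.finite_range H).subset
  rintro m ⟨L, ω, -, rfl⟩
  exact pathMax_mem_range L ω

lemma commSet_nonempty (hconn : ConnGraph rel) (a b : X) :
    {m : ℝ | ∃ L ω, IsPathW rel a b L ω ∧ m = pathMax H L ω}.Nonempty := by
  obtain ⟨L, ω, h⟩ := hconn a b
  exact ⟨pathMax H L ω, L, ω, h, rfl⟩

lemma commH_mem (hconn : ConnGraph rel) (a b : X) :
    ∃ L ω, IsPathW rel a b L ω ∧ commH rel H a b = pathMax H L ω :=
  (commSet_nonempty hconn a b).csInf_mem (commSet_finite a b)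

lemma commH_le {a b : X} {L : ℕ} {ω : ℕ → X} (h : IsPathW rel a b L ω) :
    commH rel H a b ≤ pathMax H L ω :=
  csInf_le (commSet_finite a b).bddBelow ⟨L, ω, h, rfl⟩

lemma le_pathMax {L : ℕ} (ω : ℕ → X) {i : ℕ} (hi : i ≤ L) : H (ω i) ≤ pathMax H L ω := by
  unfold pathMax
  exact Finset.le_sup' (fun i => H (ω i)) (Finset.mem_range.2 (Nat.lt_succ_of_le hi))

lemma left_le_pathMax {a b : X} {L : ℕ} {ω : ℕ → X} (h : IsPathW rel a b L ω) :
    H a ≤ pathMax H L ω := h.1 ▸ le_pathMax ω (Nat.zero_le L)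

lemma right_le_pathMax {a b : X} {L : ℕ} {ω : ℕ → X} (h : IsPathW rel a b L ω) :
    H b ≤ pathMax H L ω := h.2.1 ▸ le_pathMax ω le_rfl

lemma left_le_commH (hconn : ConnGraph rel) (a b : X) : H a ≤ commH rel H a b := by
  obtain ⟨L, ω, h, e⟩ := commH_mem (H := H) hconn a b
  rw [e]; exact left_le_pathMax h

lemma right_le_commH (hconn : ConnGraph rel) (a b : X) : H b ≤ commH rel H a b := by
  obtain ⟨L, ω, h, e⟩ := commH_mem (H := H) hconn a b
  rw [e]; exact right_le_pathMax h

lemma commH_self_le (a : X) : commH rel H a a ≤ H a := by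
  have h : IsPathW rel a a 0 (fun _ => a) := ⟨rfl, rfl, fun i hi => absurd hi (Nat.not_lt_zero i)⟩
  refine (commH_le h).trans ?_
  simp [pathMax]

lemma commH_symm_le (hsymm : Symmetric rel) (hconn : ConnGraph rel) (a b : X) :
    commH rel H b a ≤ commH rel H a b := by
  obtain ⟨L, ω, h, e⟩ := commH_mem (H := H) hconn a b
  have hrev : IsPathW rel b a L (fun i => ω (L - i)) := by
    refine ⟨by simp [h.2.1], by simp [h.1], fun i hi => ?_⟩
    have hj : L - (i + 1) + 1 = L - i := by omega
    have := hsymm (h.2.2 (L - (i + 1)) (by omega))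
    rw [hj] at this
    exact this
  have hmax : pathMax H L (fun i => ω (L - i)) ≤ pathMax H L ω := by
    apply Finset.sup'_le
    intro i hi
    exact le_pathMax ω (by omega)
  rw [e]
  exact (commH_le hrev).trans hmax

lemma commH_symm (hsymm : Symmetric rel) (hconn : ConnGraph rel) (a b : X) :
    commH rel H a b = commH rel H b a :=
  le_antisymm (commH_symm_le hsymm hconn b a) (commH_symm_le hsymm hconn a b)

lemma commH_trans (hconn : ConnGraph rel) (a b c : X) :
    commH rel H a c ≤ max (commH rel H a b) (commH rel H b c) := by
  obtain ⟨L1, ω1, h1, e1⟩ := commH_mem (H := H) hconn a b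
  obtain ⟨L2, ω2, h2, e2⟩ := commH_mem (H := H) hconn b c
  set ω : ℕ → X := fun i => if i ≤ L1 then ω1 i else ω2 (i - L1) with hω
  have hpath : IsPathW rel a c (L1 + L2) ω := by
    refine ⟨by simp [hω, h1.1], ?_, ?_⟩
    · by_cases h : L1 + L2 ≤ L1
      · have hL2 : L2 = 0 := by omega
        simp only [hω, if_pos h]
        rw [show L1 + L2 = L1 by omega, h1.2.1, ← h2.2.1, hL2, h2.1]
      · simp only [hω, if_neg h]
        rw [show L1 + L2 - L1 = L2 by omega, h2.2.1]
    · intro i hi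
      rcases lt_trichotomy i L1 with hlt | heq | hgt
      · simp only [hω, if_pos (le_of_lt hlt), if_pos (Nat.succ_le_of_lt hlt)]
        exact h1.2.2 i hlt
      · subst heq
        simp only [hω, if_pos le_rfl, if_neg (by omega : ¬ i + 1 ≤ i)]
        rw [h1.2.1, ← h2.1, show i + 1 - i = 0 + 1 by omega]
        exact h2.2.2 0 (by omega)
      · simp only [hω, if_neg (by omega : ¬ i ≤ L1), if_neg (by omega : ¬ i + 1 ≤ L1)]
        rw [show i + 1 - L1 = (i - L1) + 1 by omega]
        exact h2.2.2 (i - L1) (by omega)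
  have hmax : pathMax H (L1 + L2) ω ≤ max (pathMax H L1 ω1) (pathMax H L2 ω2) := by
    apply Finset.sup'_le
    intro i hi
    by_cases h : i ≤ L1
    · simp only [hω, if_pos h]
      exact le_max_of_le_left (le_pathMax ω1 h)
    · simp only [hω, if_neg h]
      refine le_max_of_le_right (le_pathMax ω2 ?_)
      rw [Finset.mem_range] at hi; omega
  rw [e1, e2]
  exact (commH_le hpath).trans hmax

set_option linter.unusedSectionVars false

lemma descent (hconn : ConnGraph rel) (sq bx : X) (Hsq : H sq = 0) (Vs : ℝ)
    (hV : ∀ η : X, η ≠ sq → η ≠ bx →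
        ({ξ : X | H ξ < H η}).Nonempty ∧
        commHS rel H {η} {ξ : X | H ξ < H η} - H η ≤ Vs) :
    ∀ n (η : X), (Finset.univ.filter (fun ζ => H ζ < H η)).card ≤ n →
      η ≠ sq → η ≠ bx → H η ≤ 0 → commH rel H η bx ≤ H η + Vs := by
  intro n
  induction n with
  | zero =>
    intro η hcard hηs hηb hH0
    obtain ⟨⟨ξ, hξ⟩, -⟩ := hV η hηs hηb
    have hmem : ξ ∈ Finset.univ.filter (fun ζ => H ζ < H η) :=
      Finset.mem_filter.2 ⟨Finset.mem_univ _, hξ⟩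
    have := Finset.card_pos.2 ⟨ξ, hmem⟩
    omega
  | succ n ih =>
    intro η hcard hηs hηb hH0
    obtain ⟨⟨ξ0, hξ0⟩, hcomm⟩ := hV η hηs hηb
    -- the infimum defining commHS is attained
    have hfin : {m : ℝ | ∃ a ∈ ({η} : Set X), ∃ b ∈ {ξ : X | H ξ < H η},
        m = commH rel H a b}.Finite := by
      apply (Set.finite_range (fun p : X × X => commH rel H p.1 p.2)).subset
      rintro m ⟨a, -, b, -, rfl⟩
      exact ⟨(a, b), rfl⟩
    have hnon : {m : ℝ | ∃ a ∈ ({η} : Set X), ∃ b ∈ {ξ : X | H ξ < H η},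
        m = commH rel H a b}.Nonempty :=
      ⟨commH rel H η ξ0, η, rfl, ξ0, hξ0, rfl⟩
    obtain ⟨a, ha, ξ, hξ, hm⟩ := hnon.csInf_mem hfin
    rw [Set.mem_singleton_iff] at ha
    rw [ha] at hm
    have hξη : H ξ < H η := hξ
    have hcξ : commH rel H η ξ ≤ H η + Vs := by
      have : commHS rel H {η} {ξ : X | H ξ < H η} = commH rel H η ξ := hm
      rw [← this]; linarith
    have hξsq : ξ ≠ sq := fun h => by rw [h, Hsq] at hξη; linarith
    by_cases hξbx : ξ = bx
    · rw [← hξbx]; exact hcξ.trans (by linarith)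
    · have hsub : Finset.univ.filter (fun ζ => H ζ < H ξ) ⊂
          Finset.univ.filter (fun ζ => H ζ < H η) := by
        constructor
        · intro ζ hζ
          simp only [Finset.mem_filter] at *
          exact ⟨hζ.1, hζ.2.trans hξη⟩
        · intro hsub'
          have := hsub' (by simp [hξη] : ξ ∈ Finset.univ.filter (fun ζ => H ζ < H η))
          simp at this
      have hcard' : (Finset.univ.filter (fun ζ => H ζ < H ξ)).card ≤ n := by
        have := Finset.card_lt_card hsub
        omega
      have hIH := ih ξ hcard' hξsq hξbx (le_of_lt (lt_of_lt_of_le hξη hH0))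
      have := commH_trans (H := H) hconn η ξ bx
      have hmax : max (commH rel H η ξ) (commH rel H ξ bx) ≤ H η + Vs :=
        max_le hcξ (hIH.trans (by linarith))
      linarith

end aux

/-- under (H1)–(H2), every η ≠ □ with Φ(η,□) ≤ Φ(η,⊞) satisfies
H(η) > H(□) = 0. -/
theorem stmt_9 [Fintype X] (rel : X → X → Prop) (H : X → ℝ)
    (hsymm : Symmetric rel) (hconn : ConnGraph rel)
    (sq bx : X) (hne : sq ≠ bx) (Hsq : H sq = 0)
    -- (H1): X_stab = {⊞}
    (hH1 : {η : X | ∀ ξ, H η ≤ H ξ} = {bx})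
    -- (H2): ∃ V* < Γ* with V_η ≤ V* for all η ∉ {□,⊞}
    (hH2 : ∃ Vs : ℝ, Vs < commH rel H sq bx - H sq ∧
      ∀ η : X, η ≠ sq → η ≠ bx →
        ({ξ : X | H ξ < H η}).Nonempty ∧
        commHS rel H {η} {ξ : X | H ξ < H η} - H η ≤ Vs) :
    ∀ η : X, η ≠ sq → commH rel H η sq ≤ commH rel H η bx → H sq < H η := by
  intro η hηsq hΦ
  by_contra hle
  push_neg at hle
  have hη0 : H η ≤ 0 := by rw [Hsq] at hle; exact hle
  have hbxmem : bx ∈ {η : X | ∀ ξ, H η ≤ H ξ} := by rw [hH1]; exact rfl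
  have hbxmin : ∀ ξ, H bx ≤ H ξ := hbxmem
  have hbxneg : H bx < 0 := by
    by_contra h
    push_neg at h
    have hbx0 : H bx = 0 := le_antisymm (Hsq ▸ hbxmin sq) h
    have : sq ∈ {η : X | ∀ ξ, H η ≤ H ξ} := fun ξ => by
      rw [Hsq, ← hbx0]; exact hbxmin ξ
    rw [hH1] at this
    exact hne this
  obtain ⟨Vs, hVs, hV⟩ := hH2
  by_cases hηbx : η = bx
  · subst hηbx
    have h1 : commH rel H η η ≤ H η := commH_self_le η
    have h2 : H sq ≤ commH rel H η sq := right_le_commH hconn η sq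
    rw [Hsq] at h2
    linarith
  · have hd := descent hconn sq bx Hsq Vs hV
      (Finset.univ.filter (fun ζ => H ζ < H η)).card η le_rfl hηsq hηbx hη0
    have ht : commH rel H sq bx ≤ max (commH rel H sq η) (commH rel H η bx) :=
      commH_trans hconn sq η bx
    have hsym : commH rel H sq η = commH rel H η sq := commH_symm hsymm hconn sq η
    have hmax : max (commH rel H sq η) (commH rel H η bx) ≤ commH rel H η bx :=
      max_le (by rw [hsym]; exact hΦ) le_rfl
    rw [Hsq] at hVs
    linarith
end

section
/- Assume hypotheses (H1) and (H2), and assume Γ* > 0. Then there exist C < ∞ and δ > 0 such that for every β ∈ (0,∞), every function h* attaining the minimum in the variational problem defining CAP_β({□},{⊞}), and every well X_i (i = 1,…,I): max_{η,η' ∈ X_i} |h*(η) − h*(η')| ≤ C e^{−δβ}. -/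
open scoped Classical

variable {X : Type*}

/-- Partition function Z_β. -/
noncomputable def Zb [Fintype X] (H : X → ℝ) (β : ℝ) : ℝ :=
  ∑ ξ : X, Real.exp (-β * H ξ)

/-- Gibbs measure μ_β. -/
noncomputable def gibbs [Fintype X] (H : X → ℝ) (β : ℝ) (η : X) : ℝ :=
  Real.exp (-β * H η) / Zb H β

/-- Metropolis transition rates c_β. -/
noncomputable def crate (rel : X → X → Prop) (H : X → ℝ) (β : ℝ) (η η' : X) : ℝ :=
  if rel η η' then Real.exp (-β * max (H η' - H η) 0) else 0

/-- Dirichlet form E_β(h). -/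
noncomputable def dirE [Fintype X] (rel : X → X → Prop) (H : X → ℝ) (β : ℝ)
    (h : X → ℝ) : ℝ :=
  (1 / 2) * ∑ η : X, ∑ η' : X, gibbs H β η * crate rel H β η η' * (h η - h η') ^ 2

/-- Capacity CAP_β(A,B). -/
noncomputable def capB [Fintype X] (rel : X → X → Prop) (H : X → ℝ) (β : ℝ)
    (A B : Set X) : ℝ :=
  sInf { e : ℝ | ∃ h : X → ℝ, (∀ η, 0 ≤ h η ∧ h η ≤ 1) ∧
    (∀ η ∈ A, h η = 1) ∧ (∀ η ∈ B, h η = 0) ∧ e = dirE rel H β h }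

/-- `a` and `b` are connected by a path staying inside `S`. -/
def connIn (rel : X → X → Prop) (S : Set X) (a b : X) : Prop :=
  ∃ L ω, IsPathW rel a b L ω ∧ ∀ i ≤ L, ω i ∈ S

/-- Γ* = Φ(□,⊞) − H(□). -/
noncomputable def gammaStar (rel : X → X → Prop) (H : X → ℝ) (a b : X) : ℝ :=
  commH rel H a b - H a

/-- X** = {η : H(η) < Γ*}. -/
noncomputable def Xss (rel : X → X → Prop) (H : X → ℝ) (a b : X) : Set X :=
  {η : X | H η < gammaStar rel H a b}

/-- The connected component of X** containing `root`. -/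
noncomputable def compOf (rel : X → X → Prop) (H : X → ℝ) (a b root : X) : Set X :=
  {η : X | connIn rel (Xss rel H a b) root η}

/-- The wells: X** ∖ (X_□ ∪ X_⊞); its connected components are X_1,…,X_I. -/
noncomputable def wellsSet (rel : X → X → Prop) (H : X → ℝ) (a b : X) : Set X :=
  Xss rel H a b \ (compOf rel H a b a ∪ compOf rel H a b b)

/-- Path shortening + telescoping: a path of step-size ≤ D inside S gives
total oscillation ≤ card X * D. -/
lemma aux_pathBound [Fintype X] (rel : X → X → Prop) (S : Set X) (h : X → ℝ)
    (D : ℝ) (hD : 0 ≤ D)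
    (hstep : ∀ η η', η ∈ S → η' ∈ S → rel η η' → |h η - h η'| ≤ D) (L : ℕ) :
    ∀ (a b : X) (ω : ℕ → X), IsPathW rel a b L ω → (∀ i ≤ L, ω i ∈ S) →
      |h a - h b| ≤ (Fintype.card X : ℝ) * D := by
  induction L using Nat.strong_induction_on with
  | _ L IH =>
  rintro a b ω ⟨h0, hL, hsteps⟩ hmem
  by_cases hdup : ∃ i j, i < j ∧ j ≤ L ∧ ω i = ω j
  · obtain ⟨i, j, hij, hjL, heq⟩ := hdup
    have hL'lt : L - (j - i) < L := by omega
    refine IH (L - (j - i)) hL'lt a b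
      (fun k => if k ≤ i then ω k else ω (k + (j - i))) ⟨?_, ?_, ?_⟩ ?_
    · simpa using h0
    · show (if L - (j - i) ≤ i then ω (L - (j - i)) else ω (L - (j - i) + (j - i))) = b
      by_cases hc : L - (j - i) ≤ i
      · rw [if_pos hc, show L - (j - i) = i from by omega, heq,
          show j = L from by omega, hL]
      · rw [if_neg hc, show L - (j - i) + (j - i) = L from by omega, hL]
    · intro k hk
      show rel (if k ≤ i then ω k else ω (k + (j - i)))
        (if k + 1 ≤ i then ω (k + 1) else ω (k + 1 + (j - i)))
      by_cases h2 : k ≤ i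
      · by_cases h1 : k + 1 ≤ i
        · rw [if_pos h2, if_pos h1]
          exact hsteps k (by omega)
        · have hki : k = i := by omega
          rw [if_pos h2, if_neg h1, hki, heq,
            show i + 1 + (j - i) = j + 1 from by omega]
          exact hsteps j (by omega)
      · rw [if_neg h2, if_neg (by omega : ¬ k + 1 ≤ i),
          show k + 1 + (j - i) = k + (j - i) + 1 by omega]
        exact hsteps (k + (j - i)) (by omega)
    · intro m hm
      by_cases hmi : m ≤ i
      · simpa [hmi] using hmem m (by omega)
      · simpa [hmi] using hmem (m + (j - i)) (by omega)
  · push_neg at hdup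
    have hinj : Function.Injective (fun k : Fin (L + 1) => ω k) := by
      intro k k' hkk
      by_contra hne
      have hne' : (k : ℕ) ≠ (k' : ℕ) := fun hc => hne (Fin.ext hc)
      rcases lt_or_gt_of_ne hne' with hlt | hlt
      · exact hdup k k' hlt (by omega) hkk
      · exact hdup k' k hlt (by omega) hkk.symm
    have hcard : L + 1 ≤ Fintype.card X := by
      simpa using Fintype.card_le_of_injective _ hinj
    have htel : |h (ω 0) - h (ω L)| ≤ ∑ i ∈ Finset.range L, |h (ω i) - h (ω (i + 1))| := by
      simpa [Real.dist_eq] using dist_le_range_sum_dist (fun i => h (ω i)) L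
    have hsum : (∑ i ∈ Finset.range L, |h (ω i) - h (ω (i + 1))|) ≤ L * D := by
      calc (∑ i ∈ Finset.range L, |h (ω i) - h (ω (i + 1))|)
          ≤ ∑ _i ∈ Finset.range L, D := by
            refine Finset.sum_le_sum fun i hi => ?_
            have hiL : i < L := Finset.mem_range.mp hi
            exact hstep _ _ (hmem i (by omega)) (hmem (i + 1) (by omega)) (hsteps i hiL)
        _ = L * D := by simp [mul_comm]
    have : |h (ω 0) - h (ω L)| ≤ (Fintype.card X : ℝ) * D := by
      refine le_trans htel (le_trans hsum ?_)
      have : (L : ℝ) ≤ (Fintype.card X : ℝ) := by exact_mod_cast by omega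
      exact mul_le_mul_of_nonneg_right this hD
    rwa [h0, hL] at this

lemma aux_Zb_nonneg [Fintype X] (H : X → ℝ) (β : ℝ) : 0 ≤ Zb H β :=
  Finset.sum_nonneg fun _ _ => (Real.exp_pos _).le

lemma aux_Zb_pos [Fintype X] [Nonempty X] (H : X → ℝ) (β : ℝ) : 0 < Zb H β :=
  Finset.sum_pos (fun _ _ => Real.exp_pos _) Finset.univ_nonempty

lemma aux_gibbs_crate [Fintype X] (rel : X → X → Prop) (H : X → ℝ) (β : ℝ)
    {η η' : X} (h : rel η η') :
    gibbs H β η * crate rel H β η η' = Real.exp (-β * max (H η') (H η)) / Zb H β := by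
  unfold gibbs crate
  rw [if_pos h, div_mul_eq_mul_div, ← Real.exp_add]
  have hkey : H η + max (H η' - H η) 0 = max (H η') (H η) := by
    rcases le_total (H η') (H η) with h1 | h1
    · rw [max_eq_right (by linarith : H η' - H η ≤ 0), max_eq_right h1]; ring
    · rw [max_eq_left (by linarith : (0:ℝ) ≤ H η' - H η), max_eq_left h1]; ring
  congr 1
  rw [← hkey]; ring

lemma aux_term_nonneg [Fintype X] (rel : X → X → Prop) (H : X → ℝ) (β : ℝ)
    (h : X → ℝ) (η η' : X) :
    0 ≤ gibbs H β η * crate rel H β η η' * (h η - h η') ^ 2 := by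
  refine mul_nonneg (mul_nonneg ?_ ?_) (sq_nonneg _)
  · exact div_nonneg (Real.exp_pos _).le (aux_Zb_nonneg H β)
  · unfold crate; split_ifs
    · exact (Real.exp_pos _).le
    · exact le_refl 0

lemma aux_dirE_nonneg [Fintype X] (rel : X → X → Prop) (H : X → ℝ) (β : ℝ)
    (h : X → ℝ) : 0 ≤ dirE rel H β h := by
  unfold dirE
  refine mul_nonneg (by norm_num) (Finset.sum_nonneg fun η _ =>
    Finset.sum_nonneg fun η' _ => aux_term_nonneg rel H β h η η')

lemma aux_term_le_two_dirE [Fintype X] (rel : X → X → Prop) (H : X → ℝ) (β : ℝ)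
    (h : X → ℝ) (a b : X) :
    gibbs H β a * crate rel H β a b * (h a - h b) ^ 2 ≤ 2 * dirE rel H β h := by
  have h2 : gibbs H β a * crate rel H β a b * (h a - h b) ^ 2
      ≤ ∑ η' : X, gibbs H β a * crate rel H β a η' * (h a - h η') ^ 2 :=
    Finset.single_le_sum (fun i _ => aux_term_nonneg rel H β h a i) (Finset.mem_univ b)
  have h3 : (∑ η' : X, gibbs H β a * crate rel H β a η' * (h a - h η') ^ 2)
      ≤ ∑ η : X, ∑ η' : X, gibbs H β η * crate rel H β η η' * (h η - h η') ^ 2 :=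
    Finset.single_le_sum
      (fun i _ => Finset.sum_nonneg fun j _ => aux_term_nonneg rel H β h i j)
      (Finset.mem_univ a)
  unfold dirE; linarith

lemma aux_commH_le [Fintype X] [Nonempty X] (rel : X → X → Prop) (H : X → ℝ)
    (a b : X) {L : ℕ} {ω : ℕ → X} (hp : IsPathW rel a b L ω) :
    commH rel H a b ≤ pathMax H L ω := by
  refine csInf_le ?_ ⟨L, ω, hp, rfl⟩
  refine ⟨Finset.univ.inf' Finset.univ_nonempty H, ?_⟩
  rintro m ⟨L', ω', hp', rfl⟩
  exact le_trans (Finset.inf'_le H (Finset.mem_univ (ω' 0)))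
    (Finset.le_sup' (fun i => H (ω' i)) (Finset.mem_range.mpr (Nat.succ_pos L')))

lemma aux_connIn_extend (rel : X → X → Prop) (S : Set X) {a η η' : X}
    (h : connIn rel S a η) (hrel : rel η η') (hη' : η' ∈ S) :
    connIn rel S a η' := by
  obtain ⟨L, ω, ⟨h0, hL, hs⟩, hm⟩ := h
  refine ⟨L + 1, fun k => if k ≤ L then ω k else η',
    ⟨by simpa using h0,
      by show (if L + 1 ≤ L then ω (L + 1) else η') = η'; rw [if_neg (by omega)], ?_⟩, ?_⟩
  · intro k hk
    show rel (if k ≤ L then ω k else η') (if k + 1 ≤ L then ω (k + 1) else η')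
    by_cases h1 : k < L
    · rw [if_pos (by omega : k ≤ L), if_pos (by omega : k + 1 ≤ L)]
      exact hs k h1
    · have hkL : k = L := by omega
      rw [if_pos (by omega : k ≤ L), if_neg (by omega : ¬ k + 1 ≤ L), hkL, hL]
      exact hrel
  · intro m _
    by_cases h1 : m ≤ L
    · simpa [h1] using hm m h1
    · simp [h1, hη']

/-- under (H1)–(H2) and Γ* > 0, there exist C < ∞ and δ > 0 such
that every minimizer h* of the variational problem for CAP_β({□},{⊞}) is, up to
Ce^{−δβ}, constant on every well X_i (i.e. on every connected component of
X** ∖ (X_□ ∪ X_⊞)): |h*(η) − h*(η')| ≤ Ce^{−δβ} for η,η' in the same well. -/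
theorem stmt_17 [Fintype X] (rel : X → X → Prop) (H : X → ℝ)
    (hsymm : Symmetric rel) (hconn : ConnGraph rel)
    (sq bx : X) (hne : sq ≠ bx) (Hsq : H sq = 0)
    -- (H1): X_stab = {⊞}
    (hH1 : {η : X | ∀ ξ, H η ≤ H ξ} = {bx})
    -- (H2): ∃ V* < Γ* with V_η ≤ V* for all η ∉ {□,⊞}
    (hH2 : ∃ Vs : ℝ, Vs < gammaStar rel H sq bx ∧
      ∀ η : X, η ≠ sq → η ≠ bx →
        ({ξ : X | H ξ < H η}).Nonempty ∧
        commHS rel H {η} {ξ : X | H ξ < H η} - H η ≤ Vs)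
    (hΓ : 0 < gammaStar rel H sq bx) :
    ∃ C : ℝ, ∃ δ : ℝ, 0 < δ ∧ ∀ β : ℝ, 0 < β →
      ∀ hstar : X → ℝ,
        (∀ η, 0 ≤ hstar η ∧ hstar η ≤ 1) → hstar sq = 1 → hstar bx = 0 →
        dirE rel H β hstar = capB rel H β {sq} {bx} →
        ∀ η η' : X, connIn rel (wellsSet rel H sq bx) η η' →
          |hstar η - hstar η'| ≤ C * Real.exp (-δ * β) := by
  haveI : Nonempty X := ⟨sq⟩
  classical
  set Γ : ℝ := gammaStar rel H sq bx with hΓdef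
  -- the maximal energy strictly below Γ
  have hTne : (Finset.univ.filter fun η : X => H η < Γ).Nonempty :=
    ⟨sq, Finset.mem_filter.mpr ⟨Finset.mem_univ _, by rw [Hsq]; exact hΓ⟩⟩
  set M : ℝ := (Finset.univ.filter fun η : X => H η < Γ).sup' hTne H with hMdef
  have hMle : ∀ η : X, H η < Γ → H η ≤ M := fun η hη =>
    Finset.le_sup' H (Finset.mem_filter.mpr ⟨Finset.mem_univ _, hη⟩)
  have hMlt : M < Γ :=
    (Finset.sup'_lt_iff hTne).mpr fun η hη => (Finset.mem_filter.mp hη).2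
  refine ⟨(Fintype.card X : ℝ) * (Fintype.card X : ℝ), (Γ - M) / 2, by linarith, ?_⟩
  intro β hβ hstar hbounds hsq1 hbx0 hmin η η' hconn'
  set δ : ℝ := (Γ - M) / 2 with hδdef
  have hZ : 0 < Zb H β := aux_Zb_pos H β
  -- the component of sq in X**
  set K : Set X := compOf rel H sq bx sq with hKdef
  have hsqK : sq ∈ K := by
    refine ⟨0, fun _ => sq, ⟨rfl, rfl, fun i hi => absurd hi (Nat.not_lt_zero i)⟩,
      fun i _ => ?_⟩
    show H sq < gammaStar rel H sq bx
    rw [Hsq]; exact hΓ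
  have hbxK : bx ∉ K := by
    rintro ⟨L, ω, hp, hm⟩
    have h1 : pathMax H L ω < Γ := by
      refine (Finset.sup'_lt_iff _).mpr fun i hi => ?_
      exact hm i (Nat.lt_succ_iff.mp (Finset.mem_range.mp hi))
    have h2 : commH rel H sq bx ≤ pathMax H L ω := aux_commH_le rel H sq bx hp
    have h3 : Γ = commH rel H sq bx := by
      rw [hΓdef]; unfold gammaStar; rw [Hsq]; ring
    linarith
  -- test function: indicator of K
  set g : X → ℝ := fun ξ => if ξ ∈ K then 1 else 0 with hgdef
  have hcap_le : capB rel H β {sq} {bx} ≤ dirE rel H β g := by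
    refine csInf_le ⟨0, ?_⟩ ⟨g, ?_, ?_, ?_, rfl⟩
    · rintro e ⟨h', _, _, _, rfl⟩
      exact aux_dirE_nonneg rel H β h'
    · intro ξ
      by_cases hξ : ξ ∈ K <;> simp [hgdef, hξ]
    · intro ξ hξ
      rw [Set.mem_singleton_iff] at hξ; subst hξ
      simp [hgdef, hsqK]
    · intro ξ hξ
      rw [Set.mem_singleton_iff] at hξ; subst hξ
      simp [hgdef, hbxK]
  -- pointwise bound on the Dirichlet form of g
  have hEg : dirE rel H β g ≤
      (1 / 2) * ((Fintype.card X : ℝ) * Fintype.card X * (Real.exp (-β * Γ) / Zb H β)) := by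
    unfold dirE
    refine mul_le_mul_of_nonneg_left ?_ (by norm_num)
    have hpt : ∀ a b : X, gibbs H β a * crate rel H β a b * (g a - g b) ^ 2
        ≤ Real.exp (-β * Γ) / Zb H β := by
      intro a b
      by_cases hr : rel a b
      · by_cases hgg : g a = g b
        · rw [hgg, sub_self]
          simp only [ne_eq, OfNat.ofNat_ne_zero, not_false_eq_true, zero_pow, mul_zero]
          positivity
        · have hΔ : (g a - g b) ^ 2 = 1 := by
            by_cases h1 : a ∈ K <;> by_cases h2 : b ∈ K <;>
              simp [hgdef, h1, h2] at hgg ⊢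
          have hmax : Γ ≤ max (H b) (H a) := by
            by_cases h1 : a ∈ K
            · have h2 : b ∉ K := by
                intro h2; exact hgg (by simp [hgdef, h1, h2])
              have h3 : ¬ H b < Γ := fun hlt =>
                h2 (aux_connIn_extend rel _ h1 hr hlt)
              exact le_trans (not_lt.mp h3) (le_max_left _ _)
            · have h2 : b ∈ K := by
                by_contra h2; exact hgg (by simp [hgdef, h1, h2])
              have h3 : ¬ H a < Γ := fun hlt =>
                h1 (aux_connIn_extend rel _ h2 (hsymm hr) hlt)
              exact le_trans (not_lt.mp h3) (le_max_right _ _)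
          rw [aux_gibbs_crate rel H β hr, hΔ, mul_one]
          have hexp : Real.exp (-β * max (H b) (H a)) ≤ Real.exp (-β * Γ) :=
            Real.exp_le_exp.mpr (by nlinarith)
          exact div_le_div_of_nonneg_right hexp hZ.le
      · simp only [crate, if_neg hr, mul_zero, zero_mul]
        positivity
    calc (∑ a : X, ∑ b : X, gibbs H β a * crate rel H β a b * (g a - g b) ^ 2)
        ≤ ∑ _a : X, ∑ _b : X, Real.exp (-β * Γ) / Zb H β := by
          exact Finset.sum_le_sum fun a _ => Finset.sum_le_sum fun b _ => hpt a b
      _ = (Fintype.card X : ℝ) * Fintype.card X * (Real.exp (-β * Γ) / Zb H β) := by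
          simp [Finset.sum_const, Finset.card_univ, mul_assoc]
  -- per-step bound in the wells
  have hstep : ∀ a b : X, a ∈ wellsSet rel H sq bx → b ∈ wellsSet rel H sq bx →
      rel a b → |hstar a - hstar b| ≤ (Fintype.card X : ℝ) * Real.exp (-δ * β) := by
    intro a b ha hb hr
    have haX : H a < Γ := ha.1
    have hbX : H b < Γ := hb.1
    have hmaxM : max (H b) (H a) ≤ M := max_le (hMle b hbX) (hMle a haX)
    have hterm : gibbs H β a * crate rel H β a b * (hstar a - hstar b) ^ 2
        ≤ 2 * dirE rel H β hstar := aux_term_le_two_dirE rel H β hstar a b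
    rw [aux_gibbs_crate rel H β hr] at hterm
    have e1 : Real.exp (-β * max (H b) (H a)) / Zb H β * (hstar a - hstar b) ^ 2
        ≤ (Fintype.card X : ℝ) * Fintype.card X * (Real.exp (-β * Γ) / Zb H β) := by
      calc Real.exp (-β * max (H b) (H a)) / Zb H β * (hstar a - hstar b) ^ 2
          ≤ 2 * dirE rel H β hstar := hterm
        _ = 2 * capB rel H β {sq} {bx} := by rw [hmin]
        _ ≤ 2 * dirE rel H β g := by linarith
        _ ≤ 2 * ((1 / 2) * ((Fintype.card X : ℝ) * Fintype.card X *
              (Real.exp (-β * Γ) / Zb H β))) := by linarith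
        _ = (Fintype.card X : ℝ) * Fintype.card X * (Real.exp (-β * Γ) / Zb H β) := by
              ring
    have e1' : Real.exp (-β * max (H b) (H a)) * (hstar a - hstar b) ^ 2
        ≤ (Fintype.card X : ℝ) * Fintype.card X * Real.exp (-β * Γ) := by
      rw [div_mul_eq_mul_div, ← mul_div_assoc] at e1
      exact (div_le_div_iff_of_pos_right hZ).mp e1
    have e2 : (hstar a - hstar b) ^ 2 ≤ (Fintype.card X : ℝ) * Fintype.card X *
        Real.exp (-β * Γ) * Real.exp (β * max (H b) (H a)) := by
      have h3 : (hstar a - hstar b) ^ 2 = Real.exp (β * max (H b) (H a)) *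
          (Real.exp (-β * max (H b) (H a)) * (hstar a - hstar b) ^ 2) := by
        rw [← mul_assoc, ← Real.exp_add,
          show β * max (H b) (H a) + -β * max (H b) (H a) = 0 from by ring,
          Real.exp_zero, one_mul]
      calc (hstar a - hstar b) ^ 2
          = Real.exp (β * max (H b) (H a)) *
            (Real.exp (-β * max (H b) (H a)) * (hstar a - hstar b) ^ 2) := h3
        _ ≤ Real.exp (β * max (H b) (H a)) *
            ((Fintype.card X : ℝ) * Fintype.card X * Real.exp (-β * Γ)) :=
            mul_le_mul_of_nonneg_left e1' (Real.exp_pos _).le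
        _ = (Fintype.card X : ℝ) * Fintype.card X * Real.exp (-β * Γ) *
            Real.exp (β * max (H b) (H a)) := by ring
    have e3 : Real.exp (-β * Γ) * Real.exp (β * max (H b) (H a)) ≤
        Real.exp (-δ * β) * Real.exp (-δ * β) := by
      rw [← Real.exp_add, ← Real.exp_add]
      refine Real.exp_le_exp.mpr ?_
      have p1 : β * max (H b) (H a) ≤ β * M :=
        mul_le_mul_of_nonneg_left hmaxM hβ.le
      have p2 : -δ * β + -δ * β = -β * Γ + β * M := by rw [hδdef]; ring
      linarith
    have key : (hstar a - hstar b) ^ 2 ≤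
        ((Fintype.card X : ℝ) * Real.exp (-δ * β)) ^ 2 := by
      have hcc : (0 : ℝ) ≤ (Fintype.card X : ℝ) * Fintype.card X := by positivity
      calc (hstar a - hstar b) ^ 2
          ≤ (Fintype.card X : ℝ) * Fintype.card X *
            (Real.exp (-β * Γ) * Real.exp (β * max (H b) (H a))) := by
              rw [← mul_assoc]; exact e2
        _ ≤ (Fintype.card X : ℝ) * Fintype.card X *
            (Real.exp (-δ * β) * Real.exp (-δ * β)) :=
            mul_le_mul_of_nonneg_left e3 hcc
        _ = ((Fintype.card X : ℝ) * Real.exp (-δ * β)) ^ 2 := by ring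
    have hR : (0 : ℝ) ≤ (Fintype.card X : ℝ) * Real.exp (-δ * β) := by positivity
    have := Real.sqrt_le_sqrt key
    rwa [Real.sqrt_sq_eq_abs, Real.sqrt_sq hR] at this
  -- conclude along the path
  obtain ⟨L, ω, hp, hm⟩ := hconn'
  have hfin := aux_pathBound rel (wellsSet rel H sq bx) hstar
    ((Fintype.card X : ℝ) * Real.exp (-δ * β)) (by positivity) hstep L η η' ω hp hm
  exact le_of_le_of_eq hfin (by ring)
end
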